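/- Every proper monomial ideal I in S = k[x_1,…,x_n] admits a Stanley filtration (x^{u_1},σ_1),…,(x^{u_m},σ_m) of S/I in which the total degree |u_i| = u_{i,1} + … + u_{i,n} satisfies |u_i| ≤ i − 1 for every 1 ≤ i ≤ m. -/

import Mathlib

open MvPolynomial

open MvPolynomial

/-- `I` is a monomial ideal: it is generated by a set of monomials `x^u`. -/
def IsMonomialIdeal {k : Type} [Field k] {n : ℕ} (I : Ideal (MvPolynomial (Fin n) k)) : Prop :=
  ∃ G : Set (Fin n →₀ ℕ), I = Ideal.span ((fun u => (monomial u (1 : k))) '' G)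

/-- The set of exponent vectors of monomials in the pair `(x^u, σ)`. -/
def stanleyPairSet {n : ℕ} (u : Fin n →₀ ℕ) (σ : Finset (Fin n)) : Set (Fin n →₀ ℕ) :=
  {w | ∃ v : Fin n →₀ ℕ, (∀ i, v i ≠ 0 → i ∈ σ) ∧ w = u + v}

/-- A Stanley decomposition of `S/I`. -/
def IsStanleyDecomp {k : Type} [Field k] {n : ℕ} (I : Ideal (MvPolynomial (Fin n) k))
    (𝔖 : Finset ((Fin n →₀ ℕ) × Finset (Fin n))) : Prop :=
  (∀ p ∈ 𝔖, ∀ q ∈ 𝔖, p ≠ q → Disjoint (stanleyPairSet p.1 p.2) (stanleyPairSet q.1 q.2)) ∧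
  (⋃ p ∈ (𝔖 : Set ((Fin n →₀ ℕ) × Finset (Fin n))), stanleyPairSet p.1 p.2)
      = {w | monomial w (1 : k) ∉ I}

/-- A Stanley filtration of `S/I`: an ordered Stanley decomposition
`(x^{u_1},σ_1),…,(x^{u_m},σ_m)` such that for every `1 ≤ j ≤ m` the first `j` pairs form a
Stanley decomposition of `S/(I + ⟨x^{u_{j+1}},…,x^{u_m}⟩)`. -/
def IsStanleyFiltration {k : Type} [Field k] {n : ℕ} (I : Ideal (MvPolynomial (Fin n) k))
    (L : List ((Fin n →₀ ℕ) × Finset (Fin n))) : Prop :=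
  IsStanleyDecomp I L.toFinset ∧
  ∀ j : ℕ, 1 ≤ j → j ≤ L.length →
    IsStanleyDecomp
      (I ⊔ Ideal.span ((fun p : (Fin n →₀ ℕ) × Finset (Fin n) => monomial p.1 (1 : k)) ''
        {p | p ∈ L.drop j}))
      (L.take j).toFinset



namespace StanAux

variable {n : ℕ}

abbrev Exp (n : ℕ) := Fin n →₀ ℕ
abbrev Pr (n : ℕ) := (Fin n →₀ ℕ) × Finset (Fin n)

def PS (p : Pr n) : Set (Exp n) := stanleyPairSet p.1 p.2

def Up (S : Set (Exp n)) : Set (Exp n) := {w | ∃ u ∈ S, u ≤ w}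

def deg (u : Exp n) : ℕ := ∑ t : Fin n, u t

lemma mem_PS {p : Pr n} {w : Exp n} :
    w ∈ PS p ↔ ∃ v : Exp n, (∀ i, v i ≠ 0 → i ∈ p.2) ∧ w = p.1 + v := Iff.rfl

lemma self_mem_PS (p : Pr n) : p.1 ∈ PS p := ⟨0, by simp⟩

lemma le_of_mem_PS {p : Pr n} {w : Exp n} (h : w ∈ PS p) : p.1 ≤ w := by
  obtain ⟨v, -, rfl⟩ := h; exact le_self_add

lemma mem_Up {S : Set (Exp n)} {w : Exp n} : w ∈ Up S ↔ ∃ u ∈ S, u ≤ w := Iff.rfl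

lemma deg_add (u v : Exp n) : deg (u + v) = deg u + deg v := by
  simp [deg, Finsupp.add_apply, Finset.sum_add_distrib]

lemma deg_single (i : Fin n) (c : ℕ) : deg (Finsupp.single i c) = c := by
  simp [deg, Finsupp.single_apply]

structure Good (s : ℕ) (G : Finset (Exp n)) (L : List (Pr n)) : Prop where
  disj : ∀ p ∈ L, ∀ q ∈ L, p ≠ q → Disjoint (PS p) (PS q)
  cover : (⋃ p ∈ {p : Pr n | p ∈ L}, PS p) = (Up (↑G : Set (Exp n)))ᶜ
  order : ∀ (a b : ℕ) (ha : a < L.length) (hb : b < L.length),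
      ∀ w ∈ PS (L[b]'hb), (L[a]'ha).1 ≤ w → a ≤ b
  degb : ∀ (a : ℕ) (ha : a < L.length), deg (L[a]'ha).1 ≤ a
  suppu : ∀ p ∈ L, ∀ i : Fin n, s ≤ (i : ℕ) → p.1 i = 0
  supps : ∀ p ∈ L, ∀ i : Fin n, s ≤ (i : ℕ) → i ∈ p.2
  nonnil : (0 : Exp n) ∉ G → L ≠ []

lemma Good.mono {s s' : ℕ} {G : Finset (Exp n)} {L : List (Pr n)} (h : Good s G L)
    (hss : s ≤ s') : Good s' G L :=
  ⟨h.disj, h.cover, h.order, h.degb,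
   fun p hp i hi => h.suppu p hp i (hss.trans hi),
   fun p hp i hi => h.supps p hp i (hss.trans hi), h.nonnil⟩

lemma Good.nil_of_zero_mem {s : ℕ} {G : Finset (Exp n)} {L : List (Pr n)} (h : Good s G L)
    (h0 : (0 : Exp n) ∈ Up (↑G : Set (Exp n))) : L = [] := by
  obtain ⟨u, hu, hle⟩ := h0
  have hu0 : u = 0 := le_antisymm hle zero_le
  cases L with
  | nil => rfl
  | cons p L =>
    exfalso
    have hmem : p.1 ∈ (⋃ q ∈ {q : Pr n | q ∈ p :: L}, PS q) :=
      Set.mem_biUnion (by simp) (self_mem_PS p)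
    rw [h.cover] at hmem
    exact hmem ⟨u, hu, hu0 ▸ zero_le⟩

end StanAux

namespace StanAux

variable {n : ℕ}

lemma PS_phi {ss : Fin n} {p : Pr n} (h0 : p.1 ss = 0) :
    PS (p.1, p.2.erase ss) = {w | w ∈ PS p ∧ w ss = 0} := by
  ext w
  constructor
  · rintro ⟨v, hv, rfl⟩
    have hvss : v ss = 0 := by
      by_contra hne
      exact (Finset.mem_erase.mp (hv ss hne)).1 rfl
    exact ⟨⟨v, fun i hi => (Finset.mem_erase.mp (hv i hi)).2, rfl⟩,
      by simp [Finsupp.add_apply, h0, hvss]⟩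
  · rintro ⟨⟨v, hv, rfl⟩, hss0⟩
    have hvss : v ss = 0 := by
      simp [Finsupp.add_apply, h0] at hss0; exact hss0
    refine ⟨v, fun i hi => Finset.mem_erase.mpr ⟨?_, hv i hi⟩, rfl⟩
    rintro rfl; exact hi hvss

lemma PS_sh {ss : Fin n} {q : Pr n} :
    PS (q.1 + Finsupp.single ss 1, q.2) = (fun z => z + Finsupp.single ss 1) '' PS q := by
  ext w
  constructor
  · rintro ⟨v, hv, rfl⟩
    exact ⟨q.1 + v, ⟨v, hv, rfl⟩, by rw [add_right_comm]⟩
  · rintro ⟨z, ⟨v, hv, rfl⟩, rfl⟩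
    exact ⟨v, hv, by rw [add_right_comm]⟩

lemma ss_pos_of_mem_sh {ss : Fin n} {q : Pr n} {w : Exp n}
    (h : w ∈ PS (q.1 + Finsupp.single ss 1, q.2)) : 1 ≤ w ss := by
  rw [PS_sh] at h
  obtain ⟨z, -, rfl⟩ := h
  simp [Finsupp.add_apply]

lemma combine {s : ℕ} {ss : Fin n} (hss : (ss : ℕ) = s)
    {G H G' : Finset (Exp n)} {M L' : List (Pr n)}
    (hH : ∀ g : Exp n, g ∈ H ↔ g ∈ G ∧ g ss = 0)
    (hG' : ∀ z : Exp n, z ∈ Up (↑G' : Set (Exp n)) ↔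
        z + Finsupp.single ss 1 ∈ Up (↑G : Set (Exp n)))
    (hM : Good s H M) (hL' : Good (s + 1) G' L') :
    Good (s + 1) G
      (M.map (fun p => (p.1, p.2.erase ss)) ++
        L'.map (fun q => (q.1 + Finsupp.single ss 1, q.2))) := by
  set e : Exp n := Finsupp.single ss 1 with he
  set φ : Pr n → Pr n := fun p => (p.1, p.2.erase ss) with hφ
  set sh : Pr n → Pr n := fun q => (q.1 + e, q.2) with hsh
  -- basic facts about members of M
  have hM0 : ∀ p ∈ M, p.1 ss = 0 := fun p hp => hM.suppu p hp ss (le_of_eq hss.symm)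
  have hMσ : ∀ p ∈ M, ss ∈ p.2 := fun p hp => hM.supps p hp ss (le_of_eq hss.symm)
  have hPSφ : ∀ p ∈ M, PS (φ p) = {w | w ∈ PS p ∧ w ss = 0} := fun p hp => PS_phi (hM0 p hp)
  -- Up facts
  have hUpH : ∀ w : Exp n, w ss = 0 →
      (w ∈ Up (↑H : Set (Exp n)) ↔ w ∈ Up (↑G : Set (Exp n))) := by
    intro w hw
    constructor
    · rintro ⟨u, hu, hle⟩
      exact ⟨u, (hH u).mp hu |>.1, hle⟩
    · rintro ⟨u, hu, hle⟩
      have : u ss = 0 := Nat.le_zero.mp (hw ▸ Finsupp.le_def.mp hle ss)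
      exact ⟨u, (hH u).mpr ⟨hu, this⟩, hle⟩
  -- the covering equality
  have hcover : (⋃ p ∈ {p : Pr n | p ∈ M.map φ ++ L'.map sh}, PS p)
      = (Up (↑G : Set (Exp n)))ᶜ := by
    ext w
    simp only [Set.mem_iUnion, Set.mem_setOf_eq, List.mem_append, List.mem_map,
      Set.mem_compl_iff, exists_prop]
    constructor
    · rintro ⟨p, hp | hp, hw⟩
      · obtain ⟨p₁, hp₁, rfl⟩ := hp
        rw [hPSφ p₁ hp₁] at hw
        obtain ⟨hw₁, hw₂⟩ := hw
        have : w ∈ (Up (↑H : Set (Exp n)))ᶜ := by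
          rw [← hM.cover]; exact Set.mem_biUnion hp₁ hw₁
        exact fun hc => this ((hUpH w hw₂).mpr hc)
      · obtain ⟨q₁, hq₁, rfl⟩ := hp
        rw [PS_sh] at hw
        obtain ⟨z, hz, rfl⟩ := hw
        have : z ∈ (Up (↑G' : Set (Exp n)))ᶜ := by
          rw [← hL'.cover]; exact Set.mem_biUnion hq₁ hz
        exact fun hc => this ((hG' z).mpr hc)
    · intro hw
      rcases Nat.eq_zero_or_pos (w ss) with h0 | h1
      · have : w ∈ (⋃ p ∈ {p : Pr n | p ∈ M}, PS p) := by
          rw [hM.cover]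
          exact fun hc => hw ((hUpH w h0).mp hc)
        obtain ⟨p₁, hp₁, hwp⟩ := by
          simpa only [Set.mem_iUnion, Set.mem_setOf_eq, exists_prop] using this
        exact ⟨φ p₁, Or.inl ⟨p₁, hp₁, rfl⟩, by rw [hPSφ p₁ hp₁]; exact ⟨hwp, h0⟩⟩
      · have hle : e ≤ w := by
          rw [he, Finsupp.single_le_iff]; exact h1
        set z₀ : Exp n := w - e with hz₀
        have hzw : z₀ + e = w := tsub_add_cancel_of_le hle
        have : z₀ ∈ (⋃ p ∈ {p : Pr n | p ∈ L'}, PS p) := by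
          rw [hL'.cover]
          intro hc
          exact hw (by rw [← hzw]; exact (hG' z₀).mp hc)
        obtain ⟨q₁, hq₁, hwq⟩ := by
          simpa only [Set.mem_iUnion, Set.mem_setOf_eq, exists_prop] using this
        refine ⟨sh q₁, Or.inr ⟨q₁, hq₁, rfl⟩, ?_⟩
        rw [PS_sh]
        exact ⟨z₀, hwq, hzw⟩
  refine ⟨?_, hcover, ?_, ?_, ?_, ?_, ?_⟩
  · -- disjointness
    intro p hp q hq hne
    rw [List.mem_append] at hp hq
    rcases hp with hp | hp <;> rcases hq with hq | hq
    · obtain ⟨p₁, hp₁, rfl⟩ := List.mem_map.mp hp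
      obtain ⟨q₁, hq₁, rfl⟩ := List.mem_map.mp hq
      have hne' : p₁ ≠ q₁ := fun h => hne (by rw [h])
      have := hM.disj p₁ hp₁ q₁ hq₁ hne'
      rw [hPSφ p₁ hp₁, hPSφ q₁ hq₁]
      exact this.mono (fun w hw => hw.1) (fun w hw => hw.1)
    · obtain ⟨p₁, hp₁, rfl⟩ := List.mem_map.mp hp
      obtain ⟨q₁, hq₁, rfl⟩ := List.mem_map.mp hq
      rw [Set.disjoint_left]
      intro w hw hw'
      rw [hPSφ p₁ hp₁] at hw
      have := ss_pos_of_mem_sh hw'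
      have h2 := hw.2
      omega
    · obtain ⟨p₁, hp₁, rfl⟩ := List.mem_map.mp hp
      obtain ⟨q₁, hq₁, rfl⟩ := List.mem_map.mp hq
      rw [Set.disjoint_left]
      intro w hw hw'
      rw [hPSφ q₁ hq₁] at hw'
      have := ss_pos_of_mem_sh hw
      have h2 := hw'.2
      omega
    · obtain ⟨p₁, hp₁, rfl⟩ := List.mem_map.mp hp
      obtain ⟨q₁, hq₁, rfl⟩ := List.mem_map.mp hq
      have hne' : p₁ ≠ q₁ := by
        intro h; exact hne (by rw [h])
      have hdisj := hL'.disj p₁ hp₁ q₁ hq₁ hne'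
      rw [Set.disjoint_left]
      intro w hw hw'
      rw [PS_sh] at hw hw'
      obtain ⟨z₁, hz₁, hze₁⟩ := hw
      obtain ⟨z₂, hz₂, hze₂⟩ := hw'
      have : z₁ = z₂ := by
        have := hze₂ ▸ hze₁
        exact add_right_cancel this
      exact Set.disjoint_left.mp hdisj hz₁ (this ▸ hz₂)
  · -- order
    intro a b ha hb w hw hle
    rw [List.length_append, List.length_map, List.length_map] at ha hb
    rcases Nat.lt_or_ge a M.length with haM | haM <;>
      rcases Nat.lt_or_ge b M.length with hbM | hbM
    · -- both in A
      have ea : ((M.map φ ++ L'.map sh)[a]'(by simp; omega)) = φ (M[a]'haM) := by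
        rw [List.getElem_append_left (by simpa using haM), List.getElem_map]
      have eb : ((M.map φ ++ L'.map sh)[b]'(by simp; omega)) = φ (M[b]'hbM) := by
        rw [List.getElem_append_left (by simpa using hbM), List.getElem_map]
      rw [eb, hPSφ _ (List.getElem_mem _)] at hw
      rw [ea] at hle
      exact hM.order a b haM hbM w hw.1 hle
    · omega
    · -- a in B, b in A : impossible
      exfalso
      have ea : ((M.map φ ++ L'.map sh)[a]'(by simp; omega)) = sh (L'[a - M.length]'(by omega)) := by
        rw [List.getElem_append_right (by simpa using haM)]
        simp
      have eb : ((M.map φ ++ L'.map sh)[b]'(by simp; omega)) = φ (M[b]'hbM) := by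
        rw [List.getElem_append_left (by simpa using hbM), List.getElem_map]
      rw [eb, hPSφ _ (List.getElem_mem _)] at hw
      rw [ea] at hle
      simp only [hsh] at hle
      have h1 := Finsupp.le_def.mp hle ss
      rw [Finsupp.add_apply, he, Finsupp.single_eq_same] at h1
      have h2 := hw.2
      omega
    · -- both in B
      have ea : ((M.map φ ++ L'.map sh)[a]'(by simp; omega)) = sh (L'[a - M.length]'(by omega)) := by
        rw [List.getElem_append_right (by simpa using haM)]
        simp
      have eb : ((M.map φ ++ L'.map sh)[b]'(by simp; omega)) = sh (L'[b - M.length]'(by omega)) := by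
        rw [List.getElem_append_right (by simpa using hbM)]
        simp
      rw [eb, PS_sh] at hw
      obtain ⟨z, hz, rfl⟩ := hw
      rw [ea] at hle
      simp only [hsh] at hle
      have hle' : (L'[a - M.length]'(by omega)).1 ≤ z := by
        rw [Finsupp.le_def]
        intro i
        have h3 := Finsupp.le_def.mp hle i
        simp only [← he, Finsupp.add_apply] at h3
        omega
      have := hL'.order (a - M.length) (b - M.length) (by omega) (by omega) z hz hle'
      omega
  · -- degree bound
    intro a ha
    rw [List.length_append, List.length_map, List.length_map] at ha
    rcases Nat.lt_or_ge a M.length with haM | haM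
    · have ea : ((M.map φ ++ L'.map sh)[a]'(by simp; omega)) = φ (M[a]'haM) := by
        rw [List.getElem_append_left (by simpa using haM), List.getElem_map]
      rw [ea]
      exact hM.degb a haM
    · have ea : ((M.map φ ++ L'.map sh)[a]'(by simp; omega)) = sh (L'[a - M.length]'(by omega)) := by
        rw [List.getElem_append_right (by simpa using haM)]
        simp
      rw [ea]
      show deg ((L'[a - M.length]'(by omega)).1 + e) ≤ a
      rw [deg_add, he, deg_single]
      have hd := hL'.degb (a - M.length) (by omega)
      -- need M nonempty unless everything is empty
      by_cases h0 : (0 : Exp n) ∈ G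
      · exfalso
        have hM' : M = [] := hM.nil_of_zero_mem ⟨0, by exact_mod_cast (hH 0).mpr ⟨h0, rfl⟩, le_refl _⟩
        have hL'' : L' = [] := hL'.nil_of_zero_mem (by
          rw [hG' 0]
          exact ⟨0, by exact_mod_cast h0, zero_le⟩)
        rw [hM', hL''] at ha
        simp at ha
      · have hne : M ≠ [] := hM.nonnil (fun hc => h0 ((hH 0).mp hc).1)
        have : 1 ≤ M.length := List.length_pos_iff.mpr hne
        omega
  · -- suppu
    intro p hp i hi
    rw [List.mem_append] at hp
    rcases hp with hp | hp
    · obtain ⟨p₁, hp₁, rfl⟩ := List.mem_map.mp hp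
      exact hM.suppu p₁ hp₁ i (by omega)
    · obtain ⟨q₁, hq₁, rfl⟩ := List.mem_map.mp hp
      show (q₁.1 + e) i = 0
      rw [Finsupp.add_apply, hL'.suppu q₁ hq₁ i hi, he, Finsupp.single_apply,
        if_neg (by intro hc; subst hc; omega), add_zero]
  · -- supps
    intro p hp i hi
    rw [List.mem_append] at hp
    rcases hp with hp | hp
    · obtain ⟨p₁, hp₁, rfl⟩ := List.mem_map.mp hp
      show i ∈ p₁.2.erase ss
      exact Finset.mem_erase.mpr ⟨by intro hc; subst hc; omega, hM.supps p₁ hp₁ i (by omega)⟩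
    · obtain ⟨q₁, hq₁, rfl⟩ := List.mem_map.mp hp
      exact hL'.supps q₁ hq₁ i hi
  · -- nonnil
    intro h0
    have hne : M ≠ [] := hM.nonnil (fun hc => h0 ((hH 0).mp hc).1)
    intro hc
    rw [List.append_eq_nil_iff] at hc
    exact hne (List.map_eq_nil_iff.mp hc.1)

end StanAux

namespace StanAux

variable {n : ℕ}

lemma core : ∀ (s : ℕ) (G : Finset (Exp n)),
    (∀ g ∈ G, ∀ i : Fin n, s ≤ (i : ℕ) → g i = 0) → ∃ L : List (Pr n), Good s G L := by
  intro s
  induction s with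
  | zero =>
    intro G hsupp
    have hall : ∀ g ∈ G, g = (0 : Exp n) := by
      intro g hg
      ext i
      exact hsupp g hg i (Nat.zero_le _)
    by_cases h0 : (0 : Exp n) ∈ G
    · refine ⟨[], ?_⟩
      have hUp : Up (↑G : Set (Exp n)) = Set.univ := by
        ext w; simp only [Set.mem_univ, iff_true]
        exact ⟨0, by exact_mod_cast h0, zero_le⟩
      exact ⟨by simp, by simp [hUp], by simp, by simp, by simp, by simp,
        fun hc => absurd h0 hc⟩
    · have hG : Up (↑G : Set (Exp n)) = ∅ := by
        ext w
        simp only [Set.mem_empty_iff_false, iff_false]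
        rintro ⟨u, hu, -⟩
        exact h0 ((hall u (by exact_mod_cast hu)) ▸ (by exact_mod_cast hu))
      refine ⟨[((0 : Exp n), (Finset.univ : Finset (Fin n)))], ?_⟩
      have hPSuniv : PS ((0 : Exp n), (Finset.univ : Finset (Fin n))) = Set.univ := by
        ext w
        simp only [Set.mem_univ, iff_true]
        exact ⟨w, fun i _ => Finset.mem_univ i, (zero_add w).symm⟩
      refine ⟨?_, ?_, ?_, ?_, ?_, ?_, ?_⟩
      · intro p hp q hq hne
        simp only [List.mem_singleton] at hp hq
        exact absurd (hp.trans hq.symm) hne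
      · rw [hG]
        ext w
        simp only [Set.mem_iUnion, Set.mem_setOf_eq, List.mem_singleton, Set.compl_empty,
          Set.mem_univ, iff_true, exists_prop]
        exact ⟨_, rfl, hPSuniv ▸ Set.mem_univ w⟩
      · intro a b ha hb _ _ _
        simp only [List.length_singleton] at ha hb
        omega
      · intro a ha
        simp only [List.length_singleton] at ha
        interval_cases a
        simp [deg]
      · intro p hp i _
        simp only [List.mem_singleton] at hp
        subst hp; simp
      · intro p hp i _
        simp only [List.mem_singleton] at hp
        subst hp; exact Finset.mem_univ i
      · intro _; simp
  | succ s IH =>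
    by_cases hs : s < n
    · set ss : Fin n := ⟨s, hs⟩ with hssdef
      have hss : (ss : ℕ) = s := rfl
      -- inner induction on the bound of the ss-degrees
      suffices h : ∀ (D : ℕ) (G : Finset (Exp n)), G.sup (fun g => g ss) ≤ D →
          (∀ g ∈ G, ∀ i : Fin n, s + 1 ≤ (i : ℕ) → g i = 0) → ∃ L : List (Pr n), Good (s+1) G L by
        intro G hsupp
        exact h (G.sup (fun g => g ss)) G le_rfl hsupp
      intro D
      induction D with
      | zero =>
        intro G hsup hsupp
        have hsupp' : ∀ g ∈ G, ∀ i : Fin n, s ≤ (i : ℕ) → g i = 0 := by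
          intro g hg i hi
          rcases Nat.lt_or_ge (s) (i : ℕ) with h | h
          · exact hsupp g hg i h
          · have : (i : ℕ) = s := le_antisymm h hi
            have : i = ss := Fin.ext (by rw [hss]; exact this)
            subst this
            have h2 : g ss ≤ G.sup (fun g => g ss) := Finset.le_sup (f := fun g => g ss) hg
            omega
        obtain ⟨L, hL⟩ := IH G hsupp'
        exact ⟨L, hL.mono (Nat.le_succ s)⟩
      | succ D IHD =>
        intro G hsup hsupp
        -- slice at level 0
        set H : Finset (Exp n) := G.filter (fun g => g ss = 0) with hHdef
        have hH : ∀ g : Exp n, g ∈ H ↔ g ∈ G ∧ g ss = 0 := by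
          intro g; simp [hHdef]
        set G' : Finset (Exp n) := G.image (fun g => g - Finsupp.single ss 1) with hG'def
        have hG' : ∀ z : Exp n, z ∈ Up (↑G' : Set (Exp n)) ↔
            z + Finsupp.single ss 1 ∈ Up (↑G : Set (Exp n)) := by
          intro z
          constructor
          · rintro ⟨u, hu, hle⟩
            obtain ⟨g, hg, rfl⟩ := by
              simpa only [hG'def, Finset.coe_image, Set.mem_image, Finset.mem_coe] using hu
            exact ⟨g, by exact_mod_cast hg, tsub_le_iff_right.mp hle⟩
          · rintro ⟨g, hg, hle⟩
            refine ⟨g - Finsupp.single ss 1, ?_, tsub_le_iff_right.mpr hle⟩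
            simp only [hG'def, Finset.coe_image, Set.mem_image, Finset.mem_coe]
            exact ⟨g, by exact_mod_cast hg, rfl⟩
        have hHsupp : ∀ g ∈ H, ∀ i : Fin n, s ≤ (i : ℕ) → g i = 0 := by
          intro g hg i hi
          obtain ⟨hgG, hgss⟩ := (hH g).mp hg
          rcases Nat.lt_or_ge (s) (i : ℕ) with h | h
          · exact hsupp g hgG i h
          · have : i = ss := Fin.ext (by rw [hss]; exact le_antisymm h hi)
            subst this; exact hgss
        have hG'sup : G'.sup (fun g => g ss) ≤ D := by
          apply Finset.sup_le
          intro u hu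
          obtain ⟨g, hg, rfl⟩ := Finset.mem_image.mp hu
          have h2 : g ss ≤ G.sup (fun g => g ss) := Finset.le_sup (f := fun g => g ss) hg
          rw [Finsupp.tsub_apply, Finsupp.single_eq_same]
          omega
        have hG'supp : ∀ g ∈ G', ∀ i : Fin n, s + 1 ≤ (i : ℕ) → g i = 0 := by
          intro u hu i hi
          obtain ⟨g, hg, rfl⟩ := Finset.mem_image.mp hu
          rw [Finsupp.tsub_apply, hsupp g hg i hi]
          omega
        obtain ⟨M, hM⟩ := IH H hHsupp
        obtain ⟨L', hL'⟩ := IHD G' hG'sup hG'supp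
        exact ⟨_, combine hss hH hG' hM hL'⟩
    · intro G hsupp
      have hsupp' : ∀ g ∈ G, ∀ i : Fin n, s ≤ (i : ℕ) → g i = 0 := by
        intro g hg i hi
        exact absurd (lt_of_lt_of_le i.isLt (Nat.le_of_not_lt hs)) (by omega)
      obtain ⟨L, hL⟩ := IH G hsupp'
      exact ⟨L, hL.mono (Nat.le_succ s)⟩

-- The take/drop reduction lemma
lemma Good.takedrop {s : ℕ} {G : Finset (Exp n)} {L : List (Pr n)} (h : Good s G L)
    (j : ℕ) (hj : j ≤ L.length) :
    (⋃ p ∈ {p : Pr n | p ∈ L.take j}, PS p)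
      = (Up ((↑G : Set (Exp n)) ∪ Prod.fst '' {p : Pr n | p ∈ L.drop j}))ᶜ := by
  ext w
  simp only [Set.mem_iUnion, Set.mem_setOf_eq, Set.mem_compl_iff, exists_prop]
  constructor
  · rintro ⟨p, hp, hw⟩
    obtain ⟨a, ha, rfl⟩ := List.mem_iff_getElem.mp hp
    have haj : a < j := by
      have := ha; rw [List.length_take] at this; omega
    have haL : a < L.length := by
      have := ha; rw [List.length_take] at this; omega
    have hgt : (L.take j)[a]'ha = L[a]'haL := List.getElem_take
    rw [hgt] at hw
    rintro ⟨u, hu, hle⟩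
    rcases hu with hu | hu
    · -- u ∈ G
      have hwU : w ∈ (⋃ p ∈ {p : Pr n | p ∈ L}, PS p) :=
        Set.mem_biUnion (List.getElem_mem haL) hw
      rw [h.cover] at hwU
      exact hwU ⟨u, hu, hle⟩
    · obtain ⟨q, hq, rfl⟩ := hu
      obtain ⟨i, hi, rfl⟩ := List.mem_iff_getElem.mp hq
      have hiL : j + i < L.length := by
        have := hi; rw [List.length_drop] at this; omega
      have hgd : (L.drop j)[i]'hi = L[j + i]'hiL := List.getElem_drop
      rw [hgd] at hle
      have := h.order (j + i) a hiL haL w hw hle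
      omega
  · intro hw
    have hwG : w ∉ Up (↑G : Set (Exp n)) := by
      intro ⟨u, hu, hle⟩
      exact hw ⟨u, Or.inl hu, hle⟩
    have hwU : w ∈ (⋃ p ∈ {p : Pr n | p ∈ L}, PS p) := by
      rw [h.cover]; exact hwG
    obtain ⟨p, hp, hwp⟩ := by
      simpa only [Set.mem_iUnion, Set.mem_setOf_eq, exists_prop] using hwU
    obtain ⟨b, hb, rfl⟩ := List.mem_iff_getElem.mp hp
    rcases Nat.lt_or_ge b j with hbj | hbj
    · refine ⟨L[b]'hb, ?_, hwp⟩
      have hbt : b < (L.take j).length := by rw [List.length_take]; omega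
      have : (L.take j)[b]'hbt = L[b]'hb := List.getElem_take
      rw [← this]
      exact List.getElem_mem hbt
    · exfalso
      apply hw
      refine ⟨(L[b]'hb).1, Or.inr ⟨L[b]'hb, ?_, rfl⟩, le_of_mem_PS hwp⟩
      have hbd : b - j < (L.drop j).length := by rw [List.length_drop]; omega
      have hmem : (L.drop j)[b - j]'hbd ∈ L.drop j := List.getElem_mem hbd
      have hgd : (L.drop j)[b - j]'hbd = L[j + (b - j)]'(by omega) := List.getElem_drop
      have hidx : j + (b - j) = b := by omega
      rw [hgd] at hmem
      simp only [hidx] at hmem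
      exact hmem

end StanAux

section Bridge

open MvPolynomial

lemma mem_monomial_span_iff {k : Type} [Field k] {n : ℕ} (S : Set (Fin n →₀ ℕ)) (w : Fin n →₀ ℕ) :
    monomial w (1 : k) ∈ Ideal.span ((fun u => (monomial u (1 : k))) '' S) ↔ ∃ u ∈ S, u ≤ w := by
  constructor
  · intro hw
    have key : ∀ f ∈ Ideal.span ((fun u => (monomial u (1 : k))) '' S),
        ∀ v : Fin n →₀ ℕ, coeff v f ≠ 0 → ∃ u ∈ S, u ≤ v := by
      intro f hf
      refine Submodule.span_induction ?_ ?_ ?_ ?_ hf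
      · rintro f ⟨u, hu, rfl⟩ v hv
        rw [coeff_monomial] at hv
        rcases eq_or_ne u v with rfl | hne
        · exact ⟨u, hu, le_refl u⟩
        · simp [hne] at hv
      · intro v hv; simp at hv
      · intro f g _ _ hf hg v hv
        rw [coeff_add] at hv
        rcases (by by_contra hc; push_neg at hc; exact hv (by rw [hc.1, hc.2, add_zero]) :
          coeff v f ≠ 0 ∨ coeff v g ≠ 0) with h | h
        · exact hf v h
        · exact hg v h
      · intro c f _ hf v hv
        rw [smul_eq_mul, coeff_mul] at hv
        obtain ⟨x, hx, hne⟩ := Finset.exists_ne_zero_of_sum_ne_zero hv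
        obtain ⟨u, hu, hle⟩ := hf x.2 (right_ne_zero_of_mul hne)
        rw [Finset.HasAntidiagonal.mem_antidiagonal] at hx
        exact ⟨u, hu, hle.trans (by rw [← hx]; exact le_add_self)⟩
    obtain ⟨u, hu, hle⟩ := key _ hw w (by simp)
    exact ⟨u, hu, hle⟩
  · rintro ⟨u, hu, hle⟩
    have : monomial w (1 : k) = monomial (w - u) (1:k) * monomial u (1:k) := by
      rw [monomial_mul, one_mul, tsub_add_cancel_of_le hle]
    rw [this]
    exact Ideal.mul_mem_left _ _ (Ideal.subset_span ⟨u, hu, rfl⟩)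

lemma exists_finset_gen {k : Type} [Field k] {n : ℕ} (G : Set (Fin n →₀ ℕ)) :
    ∃ G₀ : Finset (Fin n →₀ ℕ), (↑G₀ : Set (Fin n →₀ ℕ)) ⊆ G ∧
      Ideal.span ((fun u => (monomial u (1 : k))) '' ↑G₀)
        = Ideal.span ((fun u => (monomial u (1 : k))) '' G) := by
  classical
  set mon : (Fin n →₀ ℕ) → MvPolynomial (Fin n) k := fun u => monomial u (1 : k) with hmon
  set I : Ideal (MvPolynomial (Fin n) k) := Ideal.span (mon '' G) with hI
  obtain ⟨T, hT⟩ : I.FG := IsNoetherian.noetherian I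
  have hsub : ∀ t : T, ∃ F : Finset (MvPolynomial (Fin n) k),
      (↑F : Set _) ⊆ mon '' G ∧ (t : MvPolynomial (Fin n) k) ∈ Ideal.span (↑F : Set _) := by
    rintro ⟨t, ht⟩
    have : t ∈ I := hT ▸ Submodule.subset_span ht
    exact Submodule.mem_span_finite_of_mem_span this
  choose F hF1 hF2 using hsub
  set FF : Finset (MvPolynomial (Fin n) k) := T.attach.biUnion (fun t => F t) with hFF
  have hFFsub : (↑FF : Set _) ⊆ mon '' G := by
    intro f hf
    simp only [hFF, Finset.coe_biUnion, Set.mem_iUnion, Finset.mem_coe] at hf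
    obtain ⟨t, -, hft⟩ := hf
    exact hF1 t hft
  have hFFspan : Ideal.span (↑FF : Set _) = I := by
    apply le_antisymm
    · rw [Ideal.span_le]
      exact hFFsub.trans Ideal.subset_span
    · rw [← hT, Ideal.span_le]
      intro t ht
      refine Ideal.span_mono ?_ (hF2 ⟨t, ht⟩)
      intro f hf
      simp only [hFF, Finset.coe_biUnion, Set.mem_iUnion, Finset.mem_coe]
      exact ⟨⟨t, ht⟩, Finset.mem_attach _ _, hf⟩
  set E : Set (Fin n →₀ ℕ) := {u | u ∈ G ∧ mon u ∈ FF} with hE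
  have hmoninj : Function.Injective mon := monomial_left_injective one_ne_zero
  have hEimg : mon '' E = ↑FF := by
    apply Set.Subset.antisymm
    · rintro f ⟨u, hu, rfl⟩; exact hu.2
    · intro f hf
      obtain ⟨u, hu, rfl⟩ := hFFsub hf
      exact ⟨u, ⟨hu, hf⟩, rfl⟩
  have hEfin : E.Finite := by
    apply Set.Finite.of_finite_image _ (hmoninj.injOn)
    rw [hEimg]
    exact FF.finite_toSet
  refine ⟨hEfin.toFinset, ?_, ?_⟩
  · intro u hu
    rw [Finset.mem_coe, Set.Finite.mem_toFinset] at hu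
    exact hu.1
  · rw [← hFFspan]
    congr 1
    rw [Set.Finite.coe_toFinset, hEimg]

end Bridge

/-- degree-bounded Stanley filtration. -/
theorem exists_stanley_filtration_degree_bound {k : Type} [Field k] {n : ℕ}
    (I : Ideal (MvPolynomial (Fin n) k)) (hmon : IsMonomialIdeal I) (hproper : I ≠ ⊤) :
    ∃ (m : ℕ) (f : Fin m → (Fin n →₀ ℕ) × Finset (Fin n)),
      IsStanleyFiltration I (List.ofFn f) ∧
      ∀ i : Fin m, (∑ t : Fin n, (f i).1 t) ≤ (i : ℕ) := by
  classical
  obtain ⟨G, rfl⟩ := hmon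
  obtain ⟨G₀, hsub, hspan⟩ := exists_finset_gen (k := k) G
  obtain ⟨L, hL⟩ := StanAux.core n G₀ (by
    intro g hg i hi
    exact absurd i.isLt (by omega))
  have key : ∀ j ≤ L.length,
      (⋃ p ∈ {p : StanAux.Pr n | p ∈ L.take j}, StanAux.PS p)
        = {w | monomial w (1:k) ∉ Ideal.span ((fun u => (monomial u (1:k))) '' G)
              ⊔ Ideal.span ((fun p : (Fin n →₀ ℕ) × Finset (Fin n) => monomial p.1 (1 : k)) ''
                  {p | p ∈ L.drop j})} := by
    intro j hj
    rw [hL.takedrop j hj]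
    have himg : (fun p : (Fin n →₀ ℕ) × Finset (Fin n) => monomial p.1 (1 : k)) ''
          {p | p ∈ L.drop j}
        = (fun u => (monomial u (1:k))) '' (Prod.fst '' {p : StanAux.Pr n | p ∈ L.drop j}) := by
      rw [Set.image_image]
    rw [himg, ← hspan, ← Ideal.span_union, ← Set.image_union]
    ext w
    simp only [Set.mem_compl_iff, Set.mem_setOf_eq]
    rw [mem_monomial_span_iff]
    exact not_congr StanAux.mem_Up
  refine ⟨L.length, L.get, ?_, ?_⟩
  · rw [IsStanleyFiltration, List.ofFn_get]
    refine ⟨⟨?_, ?_⟩, fun j hj1 hj2 => ⟨?_, ?_⟩⟩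
    · intro p hp q hq hne
      exact hL.disj p (List.mem_toFinset.mp hp) q (List.mem_toFinset.mp hq) hne
    · rw [List.coe_toFinset]
      have h1 := key L.length le_rfl
      rw [List.take_length, List.drop_length] at h1
      simp only [List.not_mem_nil, Set.setOf_false, Set.image_empty, Ideal.span_empty,
        sup_bot_eq] at h1
      exact h1
    · intro p hp q hq hne
      exact hL.disj p (List.mem_of_mem_take (List.mem_toFinset.mp hp)) q
        (List.mem_of_mem_take (List.mem_toFinset.mp hq)) hne
    · rw [List.coe_toFinset]
      exact key j hj2
  · intro i
    have := hL.degb i.1 i.2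
    simpa [StanAux.deg, List.get_eq_getElem] using this
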